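/- Let u, v ∈ ℝ⁴ be linearly independent unit spacelike vectors. A real number λ makes (λ−1)u − λv lightlike if and only if (2 − 2⟨u,v⟩)λ² + (2⟨u,v⟩ − 2)λ + 1 = 0. Consequently: if ⟨u,v⟩² < 1 there is no such λ; if ⟨u,v⟩ = −1 there is exactly one such λ, namely λ = 1/2; if ⟨u,v⟩ < −1 there are exactly two such λ; and in both of the latter cases every such λ lies in the open interval (0,1). -/

import Mathlib

/-- The Lorentz (Minkowski) inner product on ℝ⁴. -/
def lor (u v : Fin 4 → ℝ) : ℝ :=
  u 0 * v 0 + u 1 * v 1 + u 2 * v 2 - u 3 * v 3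

/-- A vector is lightlike if it is nonzero and Lorentz-null. -/
def IsLightlike (u : Fin 4 → ℝ) : Prop := u ≠ 0 ∧ lor u u = 0

theorem stmt_4 (u v : Fin 4 → ℝ)
    (hu : lor u u = 1) (hv : lor v v = 1)
    (hLI : LinearIndependent ℝ ![u, v]) :
    (∀ l : ℝ, IsLightlike ((l - 1) • u - l • v) ↔
      (2 - 2 * lor u v) * l ^ 2 + (2 * lor u v - 2) * l + 1 = 0) ∧
    ((lor u v) ^ 2 < 1 → ∀ l : ℝ, ¬ IsLightlike ((l - 1) • u - l • v)) ∧
    (lor u v = -1 → ∀ l : ℝ, (IsLightlike ((l - 1) • u - l • v) ↔ l = 1 / 2)) ∧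
    (lor u v < -1 → ∃ l₁ l₂ : ℝ, l₁ ≠ l₂ ∧
      ∀ l : ℝ, (IsLightlike ((l - 1) • u - l • v) ↔ (l = l₁ ∨ l = l₂))) ∧
    (lor u v ≤ -1 → ∀ l : ℝ, IsLightlike ((l - 1) • u - l • v) →
      l ∈ Set.Ioo (0 : ℝ) 1) := by
  set k := lor u v with hk
  have hne : ∀ l : ℝ, (l - 1) • u - l • v ≠ 0 := by
    intro l h
    have hpair := LinearIndependent.pair_iff.mp hLI (l - 1) (-l)
    have h0 : (l - 1) • u + (-l) • v = 0 := by
      rw [← h]; module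
    obtain ⟨h1, h2⟩ := hpair h0
    have : l = 1 := by linarith [sub_eq_zero.mp h1]
    simp [this] at h2
  have hquad : ∀ l : ℝ, lor ((l - 1) • u - l • v) ((l - 1) • u - l • v) =
      (2 - 2 * k) * l ^ 2 + (2 * k - 2) * l + 1 := by
    intro l
    simp only [lor, Pi.sub_apply, Pi.smul_apply, smul_eq_mul] at hu hv hk ⊢
    linear_combination (l - 1) ^ 2 * hu + l ^ 2 * hv + (2 * l ^ 2 - 2 * l) * hk
  have key : ∀ l : ℝ, IsLightlike ((l - 1) • u - l • v) ↔
      (2 - 2 * k) * l ^ 2 + (2 * k - 2) * l + 1 = 0 := by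
    intro l
    constructor
    · intro h; rw [← hquad l]; exact h.2
    · intro h; exact ⟨hne l, by rw [hquad l]; exact h⟩
  refine ⟨key, ?_, ?_, ?_, ?_⟩
  · intro hk2 l hl
    have hQ := (key l).mp hl
    have h1 : k < 1 := by nlinarith
    have h2 : -1 < k := by nlinarith
    nlinarith [mul_nonneg (by linarith : (0:ℝ) ≤ 2 - 2 * k) (sq_nonneg (l - 1/2))]
  · intro hkm l
    rw [key l, hkm]
    constructor
    · intro h
      have : (2 * l - 1) ^ 2 = 0 := by nlinarith
      have := pow_eq_zero_iff (n := 2) (by norm_num) |>.mp this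
      linarith
    · intro h; subst h; norm_num
  · intro hkm
    set c : ℝ := (-(1 + k)) / (4 * (1 - k)) with hc
    have hcpos : 0 < c := by
      apply div_pos <;> linarith
    set s := Real.sqrt c with hs
    have hs2 : s ^ 2 = c := Real.sq_sqrt hcpos.le
    have hspos : 0 < s := Real.sqrt_pos.mpr hcpos
    refine ⟨1/2 + s, 1/2 - s, by intro h; nlinarith, ?_⟩
    intro l
    rw [key l]
    have hfac : (2 - 2 * k) * l ^ 2 + (2 * k - 2) * l + 1 =
        (2 - 2 * k) * ((l - (1/2 + s)) * (l - (1/2 - s))) := by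
      have h4 : (4 : ℝ) * (1 - k) ≠ 0 := by intro h; nlinarith
      field_simp [hc] at hs2 ⊢
      have hc' : 4 * (1 - k) * c = -(1 + k) := by rw [hc]; exact mul_div_cancel₀ _ h4
      linear_combination (4 * (1 - k)) * hs2 + hc'
    rw [hfac]
    constructor
    · intro h
      have hne2 : (2 - 2 * k) ≠ 0 := by intro h'; nlinarith
      have := mul_eq_zero.mp h
      rcases this with h' | h'
      · exact absurd h' hne2
      · rcases mul_eq_zero.mp h' with h'' | h''
        · left; linarith
        · right; linarith
    · rintro (h | h) <;> subst h <;> ring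
  · intro hkm l hl
    have hQ := (key l).mp hl
    constructor
    · by_contra h
      push_neg at h
      nlinarith [mul_nonneg (by linarith : (0:ℝ) ≤ 2 - 2 * k) (sq_nonneg l),
        mul_nonneg (by linarith : (0:ℝ) ≤ 2 - 2 * k) (mul_nonneg (neg_nonneg.mpr h) (by linarith : (0:ℝ) ≤ 1 - l))]
    · by_contra h
      push_neg at h
      nlinarith [mul_nonneg (by linarith : (0:ℝ) ≤ 2 - 2 * k) (sq_nonneg (l-1)),
        mul_nonneg (by linarith : (0:ℝ) ≤ 2 - 2 * k) (mul_nonneg (by linarith : (0:ℝ) ≤ l) (by linarith : (0:ℝ) ≤ l - 1))]
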